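/- Let H be a complex Hilbert space and let p, q be orthogonal projections on H with ‖p − q‖ < 1. Set w := (p − q)². Then 1 − w is a positive invertible operator, and the operator Ũ := (1 − w)^{−1/2} (pq + (1−p)(1−q)), where (1 − w)^{−1/2} is defined by the continuous functional calculus, is unitary (Ũ*Ũ = ŨŨ* = 1) and satisfies Ũ q = p Ũ; in particular Ũ maps the range of q onto the range of p. -/

import Mathlib

lemma commute_cfc_of_commute' {H : Type*} [NormedAddCommGroup H]
    [InnerProductSpace ℂ H] [CompleteSpace H]
    {a b : H →L[ℂ] H} (hab : Commute b a) (f : ℝ → ℝ) :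
    Commute b (cfc f a) := by
  by_cases ha : IsSelfAdjoint a
  · by_cases hf : ContinuousOn f (spectrum ℝ a)
    · rw [cfc_apply f a ha hf]
      suffices h : ∀ g : C(spectrum ℝ a, ℝ), Commute b (cfcHom ha g) from h _
      intro g
      set S : Set C(spectrum ℝ a, ℝ) := {g | Commute b (cfcHom ha g)} with hS
      have hcont : Continuous fun g : C(spectrum ℝ a, ℝ) => cfcHom ha g :=
        (cfcHom_isClosedEmbedding ha).continuous
      have hclosed : IsClosed S :=
        isClosed_eq ((continuous_mul_left b).comp hcont)
          ((continuous_mul_right b).comp hcont)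
      have hX : cfcHom ha (Polynomial.X.toContinuousMapOn (spectrum ℝ a)) = a := by
        have : Polynomial.X.toContinuousMapOn (spectrum ℝ a)
            = (ContinuousMap.id ℝ).restrict (spectrum ℝ a) := by
          ext x; simp [Polynomial.toContinuousMapOn, Polynomial.toContinuousMap]
        rw [this, cfcHom_id ha]
      have hsub : (polynomialFunctions (spectrum ℝ a) : Set C(spectrum ℝ a, ℝ)) ⊆ S := by
        intro g hg
        rw [polynomialFunctions.eq_adjoin_X] at hg
        induction hg using Algebra.adjoin_induction with
        | mem x hx =>
            simp only [Set.mem_singleton_iff] at hx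
            subst hx
            simpa [hS, Set.mem_setOf_eq, hX] using hab
        | algebraMap r =>
            simp only [hS, Set.mem_setOf_eq, AlgHomClass.commutes]
            exact (Algebra.commute_algebraMap_right r b)
        | add x y hx hy hx' hy' =>
            simp only [hS, Set.mem_setOf_eq, map_add] at *
            exact hx'.add_right hy'
        | mul x y hx hy hx' hy' =>
            simp only [hS, Set.mem_setOf_eq, map_mul] at *
            exact hx'.mul_right hy'
      have hdense := polynomialFunctions.topologicalClosure (spectrum ℝ a)
      have : g ∈ closure (polynomialFunctions (spectrum ℝ a) : Set C(spectrum ℝ a, ℝ)) := by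
        have : g ∈ (polynomialFunctions (spectrum ℝ a)).topologicalClosure := by
          rw [hdense]; trivial
        exact this
      exact closure_minimal hsub hclosed this
    · simp only [cfc_apply_of_not_continuousOn a hf]
      exact Commute.zero_right b
  · simp only [cfc_apply_of_not_predicate a ha]
    exact Commute.zero_right b

theorem kato_transformation_unitary {H : Type*} [NormedAddCommGroup H]
    [InnerProductSpace ℂ H] [CompleteSpace H]
    (p q : H →L[ℂ] H) (hp : p * p = p) (hps : star p = p)
    (hq : q * q = q) (hqs : star q = q) (hpq : ‖p - q‖ < 1) :
    0 ≤ 1 - (p - q) ^ 2 ∧ IsUnit (1 - (p - q) ^ 2) ∧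
    ∀ U : H →L[ℂ] H,
      U = cfc (fun x : ℝ => (Real.sqrt x)⁻¹) (1 - (p - q) ^ 2) *
            (p * q + (1 - p) * (1 - q)) →
      star U * U = 1 ∧ U * star U = 1 ∧ U * q = p * U ∧
      U '' Set.range q = Set.range p := by
  have hp' : ∀ x : H →L[ℂ] H, p * (p * x) = p * x := fun x => by rw [← mul_assoc, hp]
  have hq' : ∀ x : H →L[ℂ] H, q * (q * x) = q * x := fun x => by rw [← mul_assoc, hq]
  set v : H →L[ℂ] H := p * q + (1 - p) * (1 - q) with hv
  have hvs : star v = q * p + (1 - q) * (1 - p) := by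
    simp [hv, star_add, star_mul, star_sub, hps, hqs]
  have h1 : star v * v = 1 - (p - q) ^ 2 := by
    rw [hvs, hv]; noncomm_ring; simp only [mul_assoc, hp, hq, hp', hq']; abel
  have h2 : v * star v = 1 - (p - q) ^ 2 := by
    rw [hvs, hv]; noncomm_ring; simp only [mul_assoc, hp, hq, hp', hq']; abel
  have h3 : v * q = p * v := by
    rw [hv]; noncomm_ring; simp only [mul_assoc, hp, hq, hp', hq']; abel
  have h4 : Commute p (1 - (p - q) ^ 2) := by
    unfold Commute SemiconjBy
    noncomm_ring; simp only [mul_assoc, hp, hq, hp', hq']; abel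
  have h6 : Commute v (1 - (p - q) ^ 2) := by
    unfold Commute SemiconjBy
    rw [← h1, ← mul_assoc, h2, h1]
  -- norms and positivity
  have hpq_sa : IsSelfAdjoint (p - q) := by
    rw [IsSelfAdjoint, star_sub, hps, hqs]
  have hw_nonneg : (0 : H →L[ℂ] H) ≤ (p - q) ^ 2 := by
    rw [sq]
    nth_rewrite 1 [← hpq_sa]
    exact star_mul_self_nonneg (p - q)
  have hw_norm : ‖(p - q) ^ 2‖ < 1 := by
    rw [sq]
    calc ‖(p - q) * (p - q)‖ ≤ ‖p - q‖ * ‖p - q‖ := norm_mul_le _ _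
      _ < 1 := by nlinarith [norm_nonneg (p - q)]
  have hgoal1 : (0 : H →L[ℂ] H) ≤ 1 - (p - q) ^ 2 := by
    rw [sub_nonneg]
    exact (CStarAlgebra.norm_le_one_iff_of_nonneg _ hw_nonneg).1 hw_norm.le
  have hu : IsUnit (1 - (p - q) ^ 2) := isUnit_one_sub_of_norm_lt_one hw_norm
  have h1w_sa : IsSelfAdjoint (1 - (p - q) ^ 2) := by
    rw [IsSelfAdjoint, star_sub, star_one, hpq_sa.pow 2]
  -- spectrum positivity
  have hspec : ∀ x ∈ spectrum ℝ (1 - (p - q) ^ 2), 0 < x := by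
    intro x hx
    rcases (spectrum_nonneg_of_nonneg hgoal1 hx).lt_or_eq with h | h
    · exact h
    · exact absurd (h ▸ hx) (spectrum.zero_notMem_iff ℝ |>.2 hu)
  set g : ℝ → ℝ := fun x => (Real.sqrt x)⁻¹ with hg
  have hg_cont : ContinuousOn g (spectrum ℝ (1 - (p - q) ^ 2)) := by
    intro x hx
    have hx' := hspec x hx
    exact ((Real.continuous_sqrt.continuousAt).inv₀
      (by positivity)).continuousWithinAt
  set c : H →L[ℂ] H := cfc g (1 - (p - q) ^ 2) with hc
  have hcc : c * c = Ring.inverse (1 - (p - q) ^ 2) := by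
    rw [hc, ← cfc_mul g g _ hg_cont hg_cont]
    have : cfc (fun x => g x * g x) (1 - (p - q) ^ 2)
        = cfc (fun x : ℝ => x⁻¹) (1 - (p - q) ^ 2) := by
      apply cfc_congr
      intro x hx
      have hx' := hspec x hx
      simp only [hg, ← mul_inv]
      rw [Real.mul_self_sqrt hx'.le]
    rw [this]
    have := cfc_inv (R := ℝ) (a := 1 - (p - q) ^ 2) (f := fun x : ℝ => x)
      (fun x hx => (hspec x hx).ne') (by fun_prop) h1w_sa
    simpa [cfc_id' ℝ (1 - (p - q) ^ 2) h1w_sa] using this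
  have hc_sa : IsSelfAdjoint c := cfc_predicate g (1 - (p - q) ^ 2)
  have hcp : Commute p c := commute_cfc_of_commute' h4 g
  have hcv : Commute v c := commute_cfc_of_commute' h6 g
  have hc1w : Commute c (1 - (p - q) ^ 2) :=
    (commute_cfc_of_commute' (Commute.refl _) g).symm
  have h7 : Commute v (Ring.inverse (1 - (p - q) ^ 2)) := by
    obtain ⟨u, huu⟩ := hu
    have h6' : Commute v (u : H →L[ℂ] H) := by rw [huu]; exact h6
    have hinv : Ring.inverse (1 - (p - q) ^ 2) = ((u⁻¹ : (H →L[ℂ] H)ˣ) : H →L[ℂ] H) := by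
      rw [← huu, Ring.inverse_unit]
    rw [hinv]; exact h6'.units_inv_right
  refine ⟨hgoal1, hu, ?_⟩
  intro U hU
  have hUs : star U = star v * c := by rw [hU, star_mul, hc_sa.star_eq]
  have key1 : star U * U = 1 := by
    rw [hU, star_mul, hc_sa.star_eq, mul_assoc, ← mul_assoc c c v, hcc, ← h7.eq, ← mul_assoc, h1,
      Ring.mul_inverse_cancel _ hu]
  have key2 : U * star U = 1 := by
    rw [hU, star_mul, hc_sa.star_eq, mul_assoc, ← mul_assoc v (star v) c, h2, ← hc1w.eq, ← mul_assoc, hcc,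
      Ring.inverse_mul_cancel _ hu]
  have key3 : U * q = p * U := by
    rw [hU, mul_assoc, h3, ← mul_assoc, ← hcp.eq, mul_assoc]
  refine ⟨key1, key2, key3, ?_⟩
  -- range statement
  have hUsurj : Function.Surjective U := by
    intro x
    refine ⟨star U x, ?_⟩
    have := congrArg (fun T : H →L[ℂ] H => T x) key2
    simpa [ContinuousLinearMap.mul_apply] using this
  have : (U : H → H) '' Set.range q = Set.range ((U : H → H) ∘ q) :=
    (Set.range_comp _ _).symm
  rw [this]
  have hcomp : (U : H → H) ∘ q = ((U * q : H →L[ℂ] H) : H → H) := rfl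
  rw [hcomp, key3]
  have : ((p * U : H →L[ℂ] H) : H → H) = (p : H → H) ∘ U := rfl
  rw [this, Set.range_comp, hUsurj.range_eq, Set.image_univ]
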